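/- For bounded operators T₁, T₂ on a complex Hilbert space H, the numerical radius of the 3×3 block operator [[O, T₁, O],[T₁, O, T₂],[O, T₂, O]] on H ⊕ H ⊕ H is at most √(w(T₁)² + w(T₂)²). -/

import Mathlib

noncomputable def numRadius {E : Type*} [NormedAddCommGroup E] [InnerProductSpace ℂ E]
    (T : E →L[ℂ] E) : ℝ :=
  sSup {r : ℝ | ∃ x : E, ‖x‖ = 1 ∧ r = ‖(inner ℂ (T x) x : ℂ)‖}

section aux
variable {E : Type*} [NormedAddCommGroup E] [InnerProductSpace ℂ E]

lemma numRadius_bddAbove (T : E →L[ℂ] E) :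
    BddAbove {r : ℝ | ∃ x : E, ‖x‖ = 1 ∧ r = ‖(inner ℂ (T x) x : ℂ)‖} := by
  refine ⟨‖T‖, ?_⟩
  rintro r ⟨x, hx, rfl⟩
  calc ‖(inner ℂ (T x) x : ℂ)‖ ≤ ‖T x‖ * ‖x‖ := norm_inner_le_norm _ _
    _ ≤ ‖T‖ * ‖x‖ * ‖x‖ := by
        gcongr; exact T.le_opNorm x
    _ = ‖T‖ := by rw [hx]; ring

lemma numRadius_nonneg (T : E →L[ℂ] E) : 0 ≤ numRadius T := by
  by_cases h : ∃ x : E, ‖x‖ = 1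
  · obtain ⟨x, hx⟩ := h
    have := le_csSup (numRadius_bddAbove T) (a := ‖(inner ℂ (T x) x : ℂ)‖) ⟨x, hx, rfl⟩
    exact le_trans (norm_nonneg _) this
  · have : {r : ℝ | ∃ x : E, ‖x‖ = 1 ∧ r = ‖(inner ℂ (T x) x : ℂ)‖} = ∅ := by
      ext r; simp only [Set.mem_setOf_eq, Set.mem_empty_iff_false, iff_false]
      rintro ⟨x, hx, -⟩; exact h ⟨x, hx⟩
    rw [numRadius, this, Real.sSup_empty]

lemma inner_le_numRadius (T : E →L[ℂ] E) (z : E) :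
    ‖(inner ℂ (T z) z : ℂ)‖ ≤ numRadius T * ‖z‖ ^ 2 := by
  rcases eq_or_ne z 0 with rfl | hz
  · simp
  · have hz' : ‖z‖ ≠ 0 := norm_ne_zero_iff.mpr hz
    set c : ℂ := (‖z‖ : ℂ)⁻¹ with hc
    have hu : ‖c • z‖ = 1 := by
      rw [norm_smul, hc]
      simp [hz']
    have hmem : ‖(inner ℂ (T (c • z)) (c • z) : ℂ)‖ ∈
        {r : ℝ | ∃ x : E, ‖x‖ = 1 ∧ r = ‖(inner ℂ (T x) x : ℂ)‖} := ⟨c • z, hu, rfl⟩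
    have hle := le_csSup (numRadius_bddAbove T) hmem
    have hval : ‖(inner ℂ (T (c • z)) (c • z) : ℂ)‖ = ‖z‖⁻¹ ^ 2 * ‖(inner ℂ (T z) z : ℂ)‖ := by
      rw [map_smul, inner_smul_left, inner_smul_right]
      simp [norm_mul, hc, RCLike.norm_conj]
      ring
    rw [hval] at hle
    have h2 : (0:ℝ) < ‖z‖ ^ 2 := by positivity
    have hle' : ‖z‖⁻¹ ^ 2 * ‖(inner ℂ (T z) z : ℂ)‖ ≤ numRadius T := hle
    have hinv : ‖z‖⁻¹ ^ 2 * ‖z‖ ^ 2 = 1 := by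
      field_simp
    nlinarith [norm_nonneg ((inner ℂ (T z) z : ℂ)), hle', hinv]

lemma key2 (T : E →L[ℂ] E) (u v : E) :
    ‖(inner ℂ (T u) v + inner ℂ (T v) u : ℂ)‖ ≤ numRadius T * (‖u‖ ^ 2 + ‖v‖ ^ 2) := by
  have h1 := inner_le_numRadius T (u + v)
  have h2 := inner_le_numRadius T (u - v)
  have e1 : (inner ℂ (T (u + v)) (u + v) : ℂ)
      = inner ℂ (T u) u + inner ℂ (T u) v + inner ℂ (T v) u + inner ℂ (T v) v := by
    rw [map_add, inner_add_left, inner_add_right, inner_add_right]; ring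
  have e2 : (inner ℂ (T (u - v)) (u - v) : ℂ)
      = inner ℂ (T u) u - inner ℂ (T u) v - inner ℂ (T v) u + inner ℂ (T v) v := by
    rw [map_sub, inner_sub_left, inner_sub_right, inner_sub_right]; ring
  have e3 : (2:ℂ) • (inner ℂ (T u) v + inner ℂ (T v) u : ℂ)
      = inner ℂ (T (u + v)) (u + v) - inner ℂ (T (u - v)) (u - v) := by
    rw [e1, e2]; ring_nf
  have hpar : ‖u + v‖ ^ 2 + ‖u - v‖ ^ 2 = 2 * (‖u‖ ^ 2 + ‖v‖ ^ 2) := by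
    have := parallelogram_law_with_norm ℂ u v
    nlinarith [this]
  have : ‖(2:ℂ) • (inner ℂ (T u) v + inner ℂ (T v) u : ℂ)‖
      ≤ numRadius T * ‖u + v‖ ^ 2 + numRadius T * ‖u - v‖ ^ 2 := by
    rw [e3]
    exact le_trans (norm_sub_le _ _) (add_le_add h1 h2)
  rw [norm_smul] at this
  simp only [Complex.norm_ofNat] at this
  have h4 : numRadius T * (‖u + v‖ ^ 2 + ‖u - v‖ ^ 2)
      = numRadius T * (2 * (‖u‖ ^ 2 + ‖v‖ ^ 2)) := by rw [hpar]
  nlinarith [this, h4]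

lemma key3 (T : E →L[ℂ] E) (u v : E) :
    ‖(inner ℂ (T u) v + inner ℂ (T v) u : ℂ)‖ ≤ 2 * numRadius T * (‖u‖ * ‖v‖) := by
  rcases eq_or_ne u 0 with rfl | hu
  · simp
  rcases eq_or_ne v 0 with rfl | hv
  · simp
  have hun : (0:ℝ) < ‖u‖ := norm_pos_iff.mpr hu
  have hvn : (0:ℝ) < ‖v‖ := norm_pos_iff.mpr hv
  set t : ℝ := Real.sqrt (‖v‖ / ‖u‖) with ht
  have htpos : 0 < t := Real.sqrt_pos.mpr (by positivity)
  have key := key2 T ((t:ℂ) • u) ((t:ℂ)⁻¹ • v)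
  have e1 : (inner ℂ (T ((t:ℂ) • u)) ((t:ℂ)⁻¹ • v) : ℂ) = inner ℂ (T u) v := by
    rw [map_smul, inner_smul_left, inner_smul_right]
    have : (starRingEnd ℂ) (t:ℂ) = (t:ℂ) := Complex.conj_ofReal t
    rw [this]
    have htne : (t:ℂ) ≠ 0 := by exact_mod_cast (ne_of_gt htpos)
    field_simp
  have e2 : (inner ℂ (T ((t:ℂ)⁻¹ • v)) ((t:ℂ) • u) : ℂ) = inner ℂ (T v) u := by
    rw [map_smul, inner_smul_left, inner_smul_right]
    have : (starRingEnd ℂ) ((t:ℂ)⁻¹) = (t:ℂ)⁻¹ := by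
      rw [map_inv₀, Complex.conj_ofReal]
    rw [this]
    have htne : (t:ℂ) ≠ 0 := by exact_mod_cast (ne_of_gt htpos)
    field_simp
  rw [e1, e2] at key
  have hn1 : ‖(t:ℂ) • u‖ = t * ‖u‖ := by
    rw [norm_smul]; simp [abs_of_pos htpos]
  have hn2 : ‖(t:ℂ)⁻¹ • v‖ = t⁻¹ * ‖v‖ := by
    rw [norm_smul]; simp [abs_of_pos htpos]
  rw [hn1, hn2] at key
  have ht2 : t ^ 2 = ‖v‖ / ‖u‖ := Real.sq_sqrt (by positivity)
  have hval : (t * ‖u‖) ^ 2 + (t⁻¹ * ‖v‖) ^ 2 = 2 * (‖u‖ * ‖v‖) := by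
    have htne : t ≠ 0 := ne_of_gt htpos
    have h5 : (t * ‖u‖) ^ 2 + (t⁻¹ * ‖v‖) ^ 2 = t ^ 2 * ‖u‖ ^ 2 + (t ^ 2)⁻¹ * ‖v‖ ^ 2 := by
      ring
    rw [h5, ht2]
    field_simp
    ring
  rw [hval] at key
  calc ‖(inner ℂ (T u) v + inner ℂ (T v) u : ℂ)‖ ≤ numRadius T * (2 * (‖u‖ * ‖v‖)) := key
    _ = 2 * numRadius T * (‖u‖ * ‖v‖) := by ring

end aux

noncomputable def blockOp {H : Type*} [NormedAddCommGroup H] [InnerProductSpace ℂ H]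
    (n : ℕ) (M : Fin n → Fin n → H →L[ℂ] H) :
    (PiLp 2 fun _ : Fin n => H) →L[ℂ] (PiLp 2 fun _ : Fin n => H) :=
  (PiLp.continuousLinearEquiv 2 ℂ (fun _ : Fin n => H)).symm.toContinuousLinearMap ∘L
    (ContinuousLinearMap.pi fun i => ∑ j, (M i j).comp (ContinuousLinearMap.proj j)) ∘L
    (PiLp.continuousLinearEquiv 2 ℂ (fun _ : Fin n => H)).toContinuousLinearMap

variable {H : Type*} [NormedAddCommGroup H] [InnerProductSpace ℂ H]
theorem stmt15 (T₁ T₂ : H →L[ℂ] H) :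
    numRadius (blockOp 3 !![0, T₁, 0; T₁, 0, T₂; 0, T₂, 0]) ≤
      Real.sqrt (numRadius T₁ ^ 2 + numRadius T₂ ^ 2) := by
  set s := Real.sqrt (numRadius T₁ ^ 2 + numRadius T₂ ^ 2) with hs
  have hs0 : 0 ≤ s := Real.sqrt_nonneg _
  have hs2 : s ^ 2 = numRadius T₁ ^ 2 + numRadius T₂ ^ 2 :=
    Real.sq_sqrt (by positivity)
  apply Real.sSup_le _ hs0
  rintro r ⟨x, hx, rfl⟩
  set T := blockOp 3 !![0, T₁, 0; T₁, 0, T₂; 0, T₂, 0] with hT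
  have happ : ∀ i, T x i = ∑ j, !![0, T₁, 0; T₁, 0, T₂; 0, T₂, 0] i j (x j) := by
    intro i; simp [hT, blockOp]
  have hinner : (inner ℂ (T x) x : ℂ)
      = (inner ℂ (T₁ (x 1)) (x 0) + inner ℂ (T₁ (x 0)) (x 1))
        + (inner ℂ (T₂ (x 1)) (x 2) + inner ℂ (T₂ (x 2)) (x 1)) := by
    rw [PiLp.inner_apply, Fin.sum_univ_three, happ 0, happ 1, happ 2]
    norm_num [Fin.sum_univ_three, Matrix.cons_val', Matrix.cons_val_zero, Matrix.cons_val_one,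
      Matrix.head_cons, Matrix.cons_val_two, Matrix.tail_cons, Matrix.empty_val',
      Matrix.cons_val_fin_one, Matrix.head_fin_const, ContinuousLinearMap.zero_apply,
      inner_add_left, inner_zero_left]
    ring
  have hb1 := key3 T₁ (x 1) (x 0)
  have hb2 := key3 T₂ (x 1) (x 2)
  have hnorm : ‖x 0‖ ^ 2 + ‖x 1‖ ^ 2 + ‖x 2‖ ^ 2 = 1 := by
    have := PiLp.norm_sq_eq_of_L2 (fun _ : Fin 3 => H) x
    rw [hx, Fin.sum_univ_three] at this
    linarith [this]
  have hmain : ‖(inner ℂ (T x) x : ℂ)‖ ≤ s := by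
    rw [hinner]
    refine le_trans (norm_add_le _ _) ?_
    refine le_trans (add_le_add hb1 hb2) ?_
    set a := ‖x 0‖; set b := ‖x 1‖; set c := ‖x 2‖
    set w₁ := numRadius T₁; set w₂ := numRadius T₂
    have hw1 : 0 ≤ w₁ := numRadius_nonneg T₁
    have hw2 : 0 ≤ w₂ := numRadius_nonneg T₂
    have ha : 0 ≤ a := norm_nonneg _
    have hb : 0 ≤ b := norm_nonneg _
    have hc : 0 ≤ c := norm_nonneg _
    -- goal: 2*w₁*(b*a) + 2*w₂*(b*c) ≤ s
    rcases eq_or_lt_of_le hs0 with hseq | hspos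
    · have hw1z : w₁ = 0 := by nlinarith [hs2, sq_nonneg w₁, sq_nonneg w₂]
      have hw2z : w₂ = 0 := by nlinarith [hs2, sq_nonneg w₁, sq_nonneg w₂]
      rw [hw1z, hw2z]
      linarith
    · have h5 : s ^ 2 * (a ^ 2 + b ^ 2 + c ^ 2) = s ^ 2 := by rw [hnorm]; ring
      have key : s * (2 * w₁ * (b * a) + 2 * w₂ * (b * c)) ≤ s * s := by
        nlinarith [sq_nonneg (s * b - (w₁ * a + w₂ * c)), sq_nonneg (w₁ * c - w₂ * a),
          h5, hs2]
      exact le_of_mul_le_mul_left key hspos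
  exact hmain
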